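/- Let Z_• be a green nonlinear stability function and suppose A is Z_s-semistable with μ_s(A)=s, and B is Z_t-semistable with μ_t(B)=t, where s < t. Then Hom_Λ(A, B) = 0. -/

import Mathlib

open scoped BigOperators

noncomputable section

/-- Dot product of a real vector with a dimension vector. -/
def dprod {n : ℕ} (x : Fin n → ℝ) (v : Fin n → ℕ) : ℝ := ∑ i, x i * (v i : ℝ)

/-- Slope of a dimension vector with respect to a linear stability function
`Z(x) = a·x + i b·x`. -/
def zslope {n : ℕ} (a b : Fin n → ℝ) (v : Fin n → ℕ) : ℝ := dprod a v / dprod b v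

/-- The semistability set `D(M)` of a module `M`, with respect to a dimension-vector
assignment `d`. -/
def DSet {Λ : Type} [Ring Λ] {n : ℕ}
    (d : (N : Type) → [AddCommGroup N] → [Module Λ N] → Fin n → ℕ)
    (M : Type) [AddCommGroup M] [Module Λ M] : Set (Fin n → ℝ) :=
  {x | dprod x (d M) = 0 ∧ ∀ M' : Submodule Λ M, dprod x (d ↥M') ≤ 0}

/-- A module is Schurian if it is nonzero and every nonzero endomorphism is invertible,
i.e. its endomorphism ring is a division algebra. -/
def Schurian (Λ : Type) [Ring Λ] (M : Type) [AddCommGroup M] [Module Λ M] : Prop :=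
  (∃ y : M, y ≠ 0) ∧ ∀ f : M →ₗ[Λ] M, f ≠ 0 → Function.Bijective f

/-- `X` belongs to `E(M)`: `X` admits a finite filtration with all subquotients
isomorphic to `M`. -/
def IsFiltered (Λ : Type) [Ring Λ] (M : Type) [AddCommGroup M] [Module Λ M]
    (X : Type) [AddCommGroup X] [Module Λ X] : Prop :=
  ∃ (k : ℕ) (F : Fin (k + 1) → Submodule Λ X), Monotone F ∧ F 0 = ⊥ ∧ F (Fin.last k) = ⊤ ∧
    ∀ i : Fin k, Nonempty
      ((↥(F i.succ) ⧸ Submodule.comap (F i.succ).subtype (F i.castSucc)) ≃ₗ[Λ] M)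

/-- Slope at time `t` of a dimension vector, for a nonlinear stability function
`Z_t(x) = a_t·x + i b_t·x`. -/
def muZ {n : ℕ} (a b : ℝ → Fin n → ℝ) (t : ℝ) (v : Fin n → ℕ) : ℝ :=
  dprod (a t) v / dprod (b t) v

/-- `M` is `Z_t`-semistable: every nonzero submodule has zslope at least that of `M`. -/
def Semistable {Λ : Type} [Ring Λ] {n : ℕ}
    (d : (N : Type) → [AddCommGroup N] → [Module Λ N] → Fin n → ℕ)
    (a b : ℝ → Fin n → ℝ) (t : ℝ)
    (M : Type) [AddCommGroup M] [Module Λ M] : Prop :=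
  ∀ M' : Submodule Λ M, M' ≠ ⊥ → muZ a b t (d M) ≤ muZ a b t (d ↥M')

/-- The nonlinear stability function given by `(a, b)` is green (for `Λ`): at every
semistable pair `(N, t₀)` (with `N` a nonzero finite-length `Λ`-module, `N`
`Z_{t₀}`-semistable and `μ_{t₀}(N) = t₀`), the derivative of `t ↦ μ_t(N)` at `t₀`
is `< 1`. -/
def ZGreen {Λ : Type} [Ring Λ] {n : ℕ}
    (d : (N : Type) → [AddCommGroup N] → [Module Λ N] → Fin n → ℕ)
    (a b : ℝ → Fin n → ℝ) : Prop :=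
  ∀ (N : Type) [AddCommGroup N] [Module Λ N] [IsNoetherian Λ N] [IsArtinian Λ N] (t₀ : ℝ),
    (∃ y : N, y ≠ 0) → Semistable d a b t₀ N → muZ a b t₀ (d N) = t₀ →
      deriv (fun t => muZ a b t (d N)) t₀ < 1

/-- `t₀(M)`: the smallest `t` with `μ_t(M) = t` (as an infimum). -/
def tzero {n : ℕ} (a b : ℝ → Fin n → ℝ) (v : Fin n → ℕ) : ℝ := sInf {t | muZ a b t v = t}

/-- `t₁(M)`: the smallest value of `t₀(M')` over nonzero submodules `M' ⊆ M`. -/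
def tone {Λ : Type} [Ring Λ] {n : ℕ}
    (d : (N : Type) → [AddCommGroup N] → [Module Λ N] → Fin n → ℕ)
    (a b : ℝ → Fin n → ℝ)
    (M : Type) [AddCommGroup M] [Module Λ M] : ℝ :=
  sInf {s : ℝ | ∃ M' : Submodule Λ M, M' ≠ ⊥ ∧ s = tzero a b (d ↥M')}


lemma aux_dprod_pos {n : ℕ} (b : Fin n → ℝ) (hb : ∀ i, 0 < b i) {v : Fin n → ℕ}
    (hv : v ≠ 0) : 0 < dprod b v := by
  obtain ⟨i, hi⟩ := Function.ne_iff.mp hv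
  refine Finset.sum_pos' (fun j _ => mul_nonneg (hb j).le (Nat.cast_nonneg _))
    ⟨i, Finset.mem_univ i, mul_pos (hb i) ?_⟩
  exact_mod_cast Nat.pos_of_ne_zero hi

lemma aux_dprod_add {n : ℕ} (x : Fin n → ℝ) (k q : Fin n → ℕ) :
    dprod x (k + q) = dprod x k + dprod x q := by
  simp [dprod, Nat.cast_add, mul_add, Finset.sum_add_distrib]

lemma aux_muZ_diff {n : ℕ} (a b : ℝ → Fin n → ℝ) (hbpos : ∀ t i, 0 < b t i)
    (hC1a : ∀ i, ContDiff ℝ 1 (fun t => a t i)) (hC1b : ∀ i, ContDiff ℝ 1 (fun t => b t i))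
    {v : Fin n → ℕ} (hv : v ≠ 0) : Differentiable ℝ (fun ρ => muZ a b ρ v) := by
  have hb : ∀ ρ, dprod (b ρ) v ≠ 0 :=
    fun ρ => (aux_dprod_pos (b ρ) (fun i => hbpos ρ i) hv).ne'
  have h1 : Differentiable ℝ (fun ρ => dprod (a ρ) v) := by
    simp only [dprod]
    exact Differentiable.fun_sum (fun i _ => ((hC1a i).differentiable one_ne_zero).mul_const _)
  have h2 : Differentiable ℝ (fun ρ => dprod (b ρ) v) := by
    simp only [dprod]
    exact Differentiable.fun_sum (fun i _ => ((hC1b i).differentiable one_ne_zero).mul_const _)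
  simpa only [muZ] using h1.fun_div h2 hb

lemma aux_sign {g : ℝ → ℝ} {w g' : ℝ} (h : HasDerivAt g g' w)
    (h0 : g w = 0) (hneg : g' < 0) :
    ∃ δ > 0, (∀ ρ, w < ρ → ρ < w + δ → g ρ < 0) ∧ (∀ ρ, w - δ < ρ → ρ < w → 0 < g ρ) := by
  have hslope := hasDerivAt_iff_tendsto_slope.mp h
  have hev : ∀ᶠ ρ in nhdsWithin w {w}ᶜ, slope g w ρ < 0 := hslope.eventually (gt_mem_nhds hneg)
  rw [eventually_nhdsWithin_iff, Metric.eventually_nhds_iff] at hev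
  obtain ⟨δ, hδ, hall⟩ := hev
  have hsl : ∀ ρ : ℝ, ρ ≠ w → dist ρ w < δ → (g ρ - g w) / (ρ - w) < 0 := by
    intro ρ hρ hd
    have := hall hd (by simpa using hρ)
    rwa [slope_def_field] at this
  refine ⟨δ, hδ, fun ρ h1 h2 => ?_, fun ρ h1 h2 => ?_⟩
  · have hd : dist ρ w < δ := by rw [Real.dist_eq, abs_lt]; constructor <;> linarith
    have hs := hsl ρ (by intro hh; rw [hh] at h1; exact lt_irrefl w h1) hd
    rcases div_neg_iff.mp hs with ⟨ha, hb⟩ | ⟨ha, hb⟩ <;> linarith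
  · have hd : dist ρ w < δ := by rw [Real.dist_eq, abs_lt]; constructor <;> linarith
    have hs := hsl ρ (by intro hh; rw [hh] at h2; exact lt_irrefl w h2) hd
    rcases div_neg_iff.mp hs with ⟨ha, hb⟩ | ⟨ha, hb⟩ <;> linarith

/-- Let `Z_•` be a green nonlinear stability function, `A` `Z_s`-semistable
with `μ_s(A) = s`, `B` `Z_t`-semistable with `μ_t(B) = t`, and `s < t`. Then
`Hom_Λ(A, B) = 0`. -/
theorem stmt9 (Λ : Type) [Ring Λ] {n : ℕ}
    (d : (N : Type) → [AddCommGroup N] → [Module Λ N] → Fin n → ℕ)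
    (hiso : ∀ (N N' : Type) [AddCommGroup N] [Module Λ N] [AddCommGroup N'] [Module Λ N']
      [IsNoetherian Λ N] [IsArtinian Λ N], (N ≃ₗ[Λ] N') → d N = d N')
    (hadd : ∀ (N : Type) [AddCommGroup N] [Module Λ N] [IsNoetherian Λ N] [IsArtinian Λ N]
      (A : Submodule Λ N), d ↥A + d (N ⧸ A) = d N)
    (hzero : ∀ (N : Type) [AddCommGroup N] [Module Λ N] [IsNoetherian Λ N] [IsArtinian Λ N],
      (d N = 0 ↔ ∀ y : N, y = 0))
    (a b : ℝ → Fin n → ℝ)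
    (hbpos : ∀ t i, 0 < b t i)
    (hC1a : ∀ i, ContDiff ℝ 1 (fun t => a t i))
    (hC1b : ∀ i, ContDiff ℝ 1 (fun t => b t i))
    (hconst : ∃ T : ℝ, 0 < T ∧ (∀ t, T ≤ t → a t = a T ∧ b t = b T) ∧
      (∀ t, t ≤ -T → a t = a (-T) ∧ b t = b (-T)))
    (hgreen : ZGreen d a b)
    (A B : Type) [AddCommGroup A] [Module Λ A] [IsNoetherian Λ A] [IsArtinian Λ A]
    [AddCommGroup B] [Module Λ B] [IsNoetherian Λ B] [IsArtinian Λ B]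
    (hA0 : ∃ y : A, y ≠ 0) (hB0 : ∃ y : B, y ≠ 0)
    (s t : ℝ) (hst : s < t)
    (hAss : Semistable d a b s A) (hAmu : muZ a b s (d A) = s)
    (hBss : Semistable d a b t B) (hBmu : muZ a b t (d B) = t) :
    ∀ f : A →ₗ[Λ] B, f = 0 := by
  intro f
  by_contra hf
  classical
  set M : Submodule Λ B := LinearMap.range f with hMdef
  have hM : M ≠ ⊥ := by
    rw [hMdef, Ne, LinearMap.range_eq_bot]; exact hf
  -- nonzero submodules of B have nonzero dimension vector
  have hPnz : ∀ P : Submodule Λ B, P ≠ ⊥ → d ↥P ≠ 0 := by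
    intro P hP h0
    obtain ⟨x, hxP, hx⟩ := (Submodule.ne_bot_iff P).mp hP
    have := (hzero ↥P).mp h0 ⟨x, hxP⟩
    exact hx (by simpa using congrArg Subtype.val this)
  have hbP : ∀ P : Submodule Λ B, P ≠ ⊥ → ∀ ρ, 0 < dprod (b ρ) (d ↥P) :=
    fun P hP ρ => aux_dprod_pos (b ρ) (fun i => hbpos ρ i) (hPnz P hP)
  have hdA : d A ≠ 0 := by
    obtain ⟨y, hy⟩ := hA0
    exact fun h0 => hy ((hzero A).mp h0 y)
  have hbA : ∀ ρ, 0 < dprod (b ρ) (d A) :=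
    fun ρ => aux_dprod_pos (b ρ) (fun i => hbpos ρ i) hdA
  -- the image has slope ≤ s at time s
  have hiqr : d (A ⧸ LinearMap.ker f) = d ↥M := hiso _ _ f.quotKerEquivRange
  have hkq : d ↥(LinearMap.ker f) + d ↥M = d A := by
    have := hadd A (LinearMap.ker f); rwa [hiqr] at this
  have hAs : dprod (a s) (d A) = s * dprod (b s) (d A) := by
    have h := hAmu; simp only [muZ] at h
    rwa [div_eq_iff (hbA s).ne'] at h
  have hker : s * dprod (b s) (d ↥(LinearMap.ker f)) ≤ dprod (a s) (d ↥(LinearMap.ker f)) := by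
    by_cases hK : LinearMap.ker f = ⊥
    · have h0 : d ↥(LinearMap.ker f) = 0 := by
        refine (hzero ↥(LinearMap.ker f)).mpr (fun y => ?_)
        have : (y : A) ∈ (⊥ : Submodule Λ A) := hK ▸ y.2
        exact Subtype.ext (by simpa using this)
      rw [h0]; simp [dprod]
    · have hKnz : d ↥(LinearMap.ker f) ≠ 0 := by
        intro h0
        obtain ⟨x, hxP, hx⟩ := (Submodule.ne_bot_iff _).mp hK
        have := (hzero ↥(LinearMap.ker f)).mp h0 ⟨x, hxP⟩
        exact hx (by simpa using congrArg Subtype.val this)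
      have hbK : 0 < dprod (b s) (d ↥(LinearMap.ker f)) :=
        aux_dprod_pos (b s) (fun i => hbpos s i) hKnz
      have h1 := hAss (LinearMap.ker f) hK
      rw [hAmu] at h1
      simp only [muZ] at h1
      rwa [le_div_iff₀ hbK] at h1
  have himg : muZ a b s (d ↥M) ≤ s := by
    have e1 : dprod (a s) (d ↥(LinearMap.ker f)) + dprod (a s) (d ↥M) = dprod (a s) (d A) := by
      rw [← hkq, aux_dprod_add]
    have e2 : dprod (b s) (d ↥(LinearMap.ker f)) + dprod (b s) (d ↥M) = dprod (b s) (d A) := by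
      rw [← hkq, aux_dprod_add]
    have e2' : s * dprod (b s) (d A) =
        s * dprod (b s) (d ↥(LinearMap.ker f)) + s * dprod (b s) (d ↥M) := by
      rw [← e2, mul_add]
    have hbM := hbP M hM s
    simp only [muZ]
    rw [div_le_iff₀ hbM]
    linarith
  -- semistability of B at t gives a wall lower bound at t
  have hBlow : ∀ P : Submodule Λ B, P ≠ ⊥ → t ≤ muZ a b t (d ↥P) := by
    intro P hP
    have := hBss P hP; rwa [hBmu] at this
  -- continuity of the slope-minus-time functions
  have hcont : ∀ P : Submodule Λ B, P ≠ ⊥ →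
      Continuous (fun ρ => muZ a b ρ (d ↥P) - ρ) := fun P hP =>
    ((aux_muZ_diff a b hbpos hC1a hC1b (hPnz P hP)).continuous).sub continuous_id
  -- the set of times in [s, t) where some nonzero submodule of M is weakly below the wall
  set S : Set ℝ :=
    {ρ | s ≤ ρ ∧ ρ < t ∧ ∃ P : Submodule Λ B, P ≠ ⊥ ∧ P ≤ M ∧ muZ a b ρ (d ↥P) ≤ ρ}
    with hSdef
  have hsS : s ∈ S := ⟨le_rfl, hst, M, hM, le_rfl, himg⟩
  have hSne : S.Nonempty := ⟨s, hsS⟩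
  have hSbdd : BddAbove S := ⟨t, fun ρ hρ => hρ.2.1.le⟩
  set w : ℝ := sSup S with hwdef
  have hsw : s ≤ w := le_csSup hSbdd hsS
  have hwt : w ≤ t := csSup_le hSne (fun ρ hρ => hρ.2.1.le)
  -- every nonzero submodule of M is weakly above the wall at time w
  have claim2 : ∀ P : Submodule Λ B, P ≠ ⊥ → P ≤ M → w ≤ muZ a b w (d ↥P) := by
    intro P hP hPM
    by_contra hc
    push_neg at hc
    rcases eq_or_lt_of_le hwt with heq | hlt
    · have h1 := hBlow P hP
      rw [heq] at hc; linarith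
    · obtain ⟨δ, hδpos, hδ⟩ := Metric.continuousAt_iff.mp ((hcont P hP).continuousAt)
        (-(muZ a b w (d ↥P) - w)) (by linarith)
      set σ := min (w + δ/2) ((w + t)/2) with hσdef
      have hσw : w < σ := lt_min (by linarith) (by linarith)
      have hσt : σ < t := lt_of_le_of_lt (min_le_right _ _) (by linarith)
      have hσδ : dist σ w < δ := by
        rw [Real.dist_eq, abs_lt]
        have h1 : σ ≤ w + δ/2 := min_le_left _ _
        constructor <;> linarith
      have hfσ := hδ hσδ
      simp only [Real.dist_eq, abs_lt] at hfσ
      have h2 := hfσ.2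
      have hσS : σ ∈ S := ⟨by linarith, hσt, P, hP, hPM, by linarith⟩
      have := le_csSup hSbdd hσS
      linarith
  -- pigeonhole: a single dimension vector witnesses times arbitrarily close to w
  have hex : ∀ k : ℕ, ∃ ρ, ρ ∈ S ∧ w - 1/(k+1) < ρ := by
    intro k
    have hpos : (0:ℝ) < 1/((k:ℝ)+1) := by positivity
    obtain ⟨ρ, hρ, hρ'⟩ := exists_lt_of_lt_csSup hSne (show w - 1/((k:ℝ)+1) < w by linarith)
    exact ⟨ρ, hρ, hρ'⟩
  choose ρ hρS hρgt using hex
  have hρle : ∀ k, ρ k ≤ w := fun k => le_csSup hSbdd (hρS k)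
  have hρlt : ∀ k, ρ k < t := fun k => (hρS k).2.1
  have hρge : ∀ k, s ≤ ρ k := fun k => (hρS k).1
  choose P hPbot hPle hPμ using fun k => (hρS k).2.2
  have hVfin : (Set.Icc (0 : Fin n → ℕ) (d B)).Finite := Set.finite_Icc _ _
  have hmem : ∀ k, d ↥(P k) ∈ Set.Icc (0 : Fin n → ℕ) (d B) := by
    intro k
    refine ⟨fun i => Nat.zero_le _, fun i => ?_⟩
    calc d ↥(P k) i ≤ (d ↥(P k) + d (B ⧸ P k)) i := by
          simpa [Pi.add_apply] using Nat.le_add_right (d ↥(P k) i) (d (B ⧸ P k) i)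
      _ = d B i := congrFun (hadd B (P k)) i
  haveI := hVfin.fintype
  obtain ⟨y, hy⟩ := Finite.exists_infinite_fiber
    (fun k => (⟨d ↥(P k), hmem k⟩ : ↥(Set.Icc (0 : Fin n → ℕ) (d B))))
  have hKinf : {k | d ↥(P k) = (y : Fin n → ℕ)}.Infinite := by
    refine Set.Infinite.mono ?_ (Set.infinite_coe_iff.mp hy)
    intro k hk
    exact congrArg Subtype.val hk
  obtain ⟨k₀, hk₀⟩ := hKinf.nonempty
  have hnear : ∀ δ > (0:ℝ), ∃ k, w - δ < ρ k ∧ muZ a b (ρ k) (d ↥(P k₀)) ≤ ρ k := by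
    intro δ hδ
    obtain ⟨N, hN⟩ := exists_nat_one_div_lt hδ
    obtain ⟨k, hkmem, hkgt⟩ := hKinf.exists_gt N
    have hde : d ↥(P k) = d ↥(P k₀) := hkmem.trans hk₀.symm
    have h1k : 1/((k:ℝ)+1) ≤ 1/((N:ℝ)+1) := by
      have hNk : ((N:ℝ)+1) ≤ ((k:ℝ)+1) := by
        have : (N:ℝ) ≤ (k:ℝ) := by exact_mod_cast hkgt.le
        linarith
      exact one_div_le_one_div_of_le (by positivity) hNk
    refine ⟨k, by linarith [hρgt k], ?_⟩
    rw [← hde]; exact hPμ k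
  have hμwle : muZ a b w (d ↥(P k₀)) ≤ w := by
    by_contra hc
    push_neg at hc
    obtain ⟨δ, hδpos, hδ⟩ := Metric.continuousAt_iff.mp
      ((hcont (P k₀) (hPbot k₀)).continuousAt) (muZ a b w (d ↥(P k₀)) - w) (by linarith)
    obtain ⟨k, hk1, hk2⟩ := hnear δ hδpos
    have hdk : dist (ρ k) w < δ := by
      rw [Real.dist_eq, abs_lt]
      constructor <;> [linarith; linarith [hρle k]]
    have hδ' := hδ hdk
    simp only [Real.dist_eq, abs_lt] at hδ'
    linarith [hδ'.1]
  have hμw : muZ a b w (d ↥(P k₀)) = w :=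
    le_antisymm hμwle (claim2 (P k₀) (hPbot k₀) (hPle k₀))
  -- P k₀ is semistable at w
  have hss : Semistable d a b w ↥(P k₀) := by
    intro Q' hQ'
    set Q : Submodule Λ B := Q'.map (P k₀).subtype with hQdef
    have hQbot : Q ≠ ⊥ := by
      obtain ⟨x, hxQ, hx⟩ := (Submodule.ne_bot_iff Q').mp hQ'
      refine (Submodule.ne_bot_iff Q).mpr ⟨(x : B), Submodule.mem_map_of_mem hxQ, ?_⟩
      simpa using hx
    have hQle : Q ≤ M := le_trans (Submodule.map_subtype_le _ _) (hPle k₀)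
    have hdQ : d ↥Q' = d ↥Q := hiso _ _
      (Submodule.equivMapOfInjective (P k₀).subtype (Submodule.injective_subtype _) Q')
    have h1 := claim2 Q hQbot hQle
    rw [hμw, hdQ]
    exact h1
  have hPne : ∃ z : ↥(P k₀), z ≠ 0 := by
    obtain ⟨x, hxP, hx⟩ := (Submodule.ne_bot_iff (P k₀)).mp (hPbot k₀)
    exact ⟨⟨x, hxP⟩, fun h => hx (by simpa using congrArg Subtype.val h)⟩
  have hgr := hgreen ↥(P k₀) w hPne hss hμw
  -- derivative information
  have hdiffat : DifferentiableAt ℝ (fun σ => muZ a b σ (d ↥(P k₀))) w :=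
    (aux_muZ_diff a b hbpos hC1a hC1b (hPnz _ (hPbot k₀))) w
  have hder : HasDerivAt (fun σ => muZ a b σ (d ↥(P k₀)) - σ)
      (deriv (fun σ => muZ a b σ (d ↥(P k₀))) w - 1) w :=
    hdiffat.hasDerivAt.sub (hasDerivAt_id w)
  obtain ⟨δ₀, hδ₀pos, hright, hleft⟩ := aux_sign hder (sub_eq_zero_of_eq hμw) (by linarith)
  rcases eq_or_lt_of_le hwt with heq | hlt
  · -- w = t : contradiction with left positivity
    obtain ⟨k, hk1, hk2⟩ := hnear δ₀ hδ₀pos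
    have hklt : ρ k < w := heq ▸ hρlt k
    have h3 : 0 < muZ a b (ρ k) (d ↥(P k₀)) - ρ k := hleft (ρ k) hk1 hklt
    linarith
  · -- w < t : contradiction with sSup
    set σ := min (w + δ₀/2) ((w + t)/2) with hσdef
    have hσw : w < σ := lt_min (by linarith) (by linarith)
    have hσt : σ < t := lt_of_le_of_lt (min_le_right _ _) (by linarith)
    have hσδ : σ < w + δ₀ := lt_of_le_of_lt (min_le_left _ _) (by linarith)
    have hgσ : muZ a b σ (d ↥(P k₀)) - σ < 0 := hright σ hσw hσδ
    have hσS : σ ∈ S := ⟨by linarith, hσt, P k₀, hPbot k₀, hPle k₀, by linarith⟩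
    have := le_csSup hSbdd hσS
    linarith
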